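/- arXiv:0912.0338 — 5 statements merged into one kernel-verified Lean document; each statement's English description precedes it below -/
import Mathlib

section
/- Let ρ > 25 and ε = 1/ρ. Define the Δ×Δ matrix M by M_{j,j} = 1/2, M_{j,k} = 1 for j > k, and M_{j,k} = ε^{k−j} for k > j. Then the vector x with x_k = ε^{k/2} is strictly positive and satisfies (Mᵀ x)_j ≤ (1/2 + 2√ε/(1−√ε)) x_j for all j, where 1/2 + 2√ε/(1−√ε) < 1. -/
open Matrix Finset

lemma geom_aux {s : ℝ} (hs0 : 0 ≤ s) (hs1 : s < 1) (m : ℕ) :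
    ∑ i ∈ Finset.range m, s ^ i ≤ 1 / (1 - s) := by
  rw [geom_sum_eq (by linarith) m,
    show s ^ m - 1 = -(1 - s ^ m) by ring, show s - 1 = -(1 - s) by ring, neg_div_neg_eq,
    div_le_div_iff₀ (by linarith) (by linarith)]
  have : 0 ≤ s ^ m := pow_nonneg hs0 m
  nlinarith

lemma sum_aux {s : ℝ} (hs0 : 0 < s) (hs1 : s < 1) {n Δ : ℕ} (hn : n < Δ) :
    ∑ i ∈ Finset.range Δ,
      (if i = n then 1/2 else if n < i then 1 else (s^2) ^ (n - i)) * s ^ (i+1)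
      ≤ (1/2 + 2*s/(1-s)) * s ^ (n+1) := by
  have h1s : 0 < 1 - s := by linarith
  have hsplit := Finset.sum_range_add_sum_Ico
    (fun i => (if i = n then 1/2 else if n < i then 1 else (s^2) ^ (n - i)) * s ^ (i+1))
    (Nat.succ_le_of_lt hn)
  rw [← hsplit, Finset.sum_range_succ]
  have hlow : ∑ i ∈ Finset.range n,
      (if i = n then 1/2 else if n < i then 1 else (s^2) ^ (n - i)) * s ^ (i+1)
      ≤ s ^ (n+2) * (1 / (1 - s)) := by
    have heq : ∀ i ∈ Finset.range n,
        (if i = n then 1/2 else if n < i then 1 else (s^2) ^ (n - i)) * s ^ (i+1)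
        = s ^ (2*n - i + 1) := by
      intro i hi
      rw [Finset.mem_range] at hi
      rw [if_neg (by omega), if_neg (by omega), ← pow_mul, ← pow_add]
      congr 1
      omega
    rw [Finset.sum_congr rfl heq, ← Finset.sum_range_reflect]
    have heq2 : ∀ i ∈ Finset.range n, s ^ (2*n - (n - 1 - i) + 1) = s ^ (n+2) * s ^ i := by
      intro i hi
      rw [Finset.mem_range] at hi
      rw [← pow_add]
      congr 1
      omega
    rw [Finset.sum_congr rfl heq2, ← Finset.mul_sum]
    exact mul_le_mul_of_nonneg_left (geom_aux hs0.le hs1 n) (pow_nonneg hs0.le _)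
  have hhigh : ∑ i ∈ Finset.Ico (n+1) Δ,
      (if i = n then 1/2 else if n < i then 1 else (s^2) ^ (n - i)) * s ^ (i+1)
      ≤ s ^ (n+2) * (1 / (1 - s)) := by
    have heq : ∀ i ∈ Finset.Ico (n+1) Δ,
        (if i = n then 1/2 else if n < i then 1 else (s^2) ^ (n - i)) * s ^ (i+1)
        = s ^ (i+1) := by
      intro i hi
      rw [Finset.mem_Ico] at hi
      rw [if_neg (by omega), if_pos (by omega), one_mul]
    rw [Finset.sum_congr rfl heq, Finset.sum_Ico_eq_sum_range]
    have heq2 : ∀ i ∈ Finset.range (Δ - (n+1)), s ^ (n + 1 + i + 1) = s ^ (n+2) * s ^ i := by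
      intro i _
      rw [← pow_add]
      congr 1
      omega
    rw [Finset.sum_congr rfl heq2, ← Finset.mul_sum]
    exact mul_le_mul_of_nonneg_left (geom_aux hs0.le hs1 _) (pow_nonneg hs0.le _)
  have hdiag : (if n = n then (1:ℝ)/2 else if n < n then 1 else (s^2) ^ (n - n)) * s ^ (n+1)
      = 1/2 * s ^ (n+1) := by simp
  rw [hdiag]
  have hrhs : (1/2 + 2*s/(1-s)) * s ^ (n+1)
      = 1/2 * s ^ (n+1) + 2 * (s ^ (n+2) * (1/(1-s))) := by
    field_simp
    ring
  rw [hrhs]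
  linarith

/-- For `ρ > 25`, `ε = 1/ρ`, the matrix `M` with `M_{j,j} = 1/2`, `M_{j,k} = 1`
for `j > k`, `M_{j,k} = ε^{k−j}` for `k > j` satisfies `Mᵀ x ≤ θ x` for the
strictly positive vector `x_k = ε^{k/2}`, with `θ = 1/2 + 2√ε/(1−√ε) < 1`. -/
theorem mixture_matrix_subinvariant (Δ : ℕ) (ρ ε : ℝ) (hρ : 25 < ρ) (hε : ε = 1 / ρ)
    (M : Matrix (Fin Δ) (Fin Δ) ℝ)
    (hM : ∀ j k : Fin Δ, M j k =
      if j = k then 1/2 else if k < j then 1 else ε ^ (k.val - j.val))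
    (x : Fin Δ → ℝ) (hx : ∀ k : Fin Δ, x k = Real.sqrt ε ^ (k.val + 1)) :
    (∀ k, 0 < x k) ∧
    (∀ j, Mᵀ.mulVec x j ≤ (1/2 + 2 * Real.sqrt ε / (1 - Real.sqrt ε)) * x j) ∧
    1/2 + 2 * Real.sqrt ε / (1 - Real.sqrt ε) < 1 := by
  have hρ0 : 0 < ρ := by linarith
  have hε0 : 0 < ε := by rw [hε]; positivity
  set s := Real.sqrt ε with hsdef
  have hs0 : 0 < s := Real.sqrt_pos.mpr hε0
  have hs5 : s < 1/5 := by
    have h25 : ε < 1/25 := by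
      rw [hε, div_lt_div_iff₀ hρ0 (by norm_num)]
      linarith
    have := Real.sqrt_lt_sqrt hε0.le h25
    have h5 : Real.sqrt (1/25) = 1/5 := by
      rw [show (1/25 : ℝ) = (1/5)^2 by norm_num, Real.sqrt_sq (by norm_num)]
    linarith [h5 ▸ this]
  have hs1 : s < 1 := by linarith
  have hεs : ε = s ^ 2 := (Real.sq_sqrt hε0.le).symm
  refine ⟨fun k => ?_, fun j => ?_, ?_⟩
  · rw [hx k]; exact pow_pos hs0 _
  · have hsum : Mᵀ.mulVec x j = ∑ k : Fin Δ, M k j * x k := by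
      simp [Matrix.mulVec, dotProduct, Matrix.transpose_apply]
    rw [hsum, hx j]
    set f : ℕ → ℝ := fun i =>
      (if i = j.val then 1/2 else if j.val < i then 1 else (s^2) ^ (j.val - i)) * s ^ (i+1)
      with hf
    have hterm : ∀ k : Fin Δ, M k j * x k = f k.val := by
      intro k
      rw [hf, hM k j, hx k, ← hεs]
      simp only [Fin.ext_iff, Fin.lt_def]
    calc ∑ k : Fin Δ, M k j * x k = ∑ i ∈ Finset.range Δ, f i := by
          rw [← Fin.sum_univ_eq_sum_range f Δ]
          exact Finset.sum_congr rfl (fun k _ => hterm k)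
      _ ≤ (1/2 + 2*s/(1-s)) * s ^ (j.val+1) := sum_aux hs0 hs1 j.isLt
  · have h1s : 0 < 1 - s := by linarith
    have : 2*s/(1-s) < 1/2 := by
      rw [div_lt_iff₀ h1s]; nlinarith
    linarith
end

section
/- For Δ ≥ 2 and all sufficiently large n, for every graph G with n vertices and maximum degree at most Δ with i.i.d. Exp(1) node weights: 1 ≤ E[W(I*)]/|I^M| ≤ 10·log Δ, where I* is the maximum weight independent set and I^M a maximum cardinality independent set. -/
open MeasureTheory ProbabilityTheory

section Aux

open Real Set Filter Topology
open scoped NNReal ENNReal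

lemma expMaxAux (t : ℝ) (ht : 0 ≤ t) :
    Integrable (fun x => max (x - t) 0) (expMeasure 1) ∧
    ∫ x, max (x - t) 0 ∂(expMeasure 1) = Real.exp (-t) := by
  have hpdfnn : ∀ x, 0 ≤ gammaPDFReal 1 1 x := gammaPDFReal_nonneg one_pos one_pos
  set ρ : ℝ → ℝ≥0 := fun x => (gammaPDFReal 1 1 x).toNNReal with hρdef
  have hρm : Measurable ρ := (measurable_gammaPDFReal 1 1).real_toNNReal
  have hρcoe : ∀ x, (ρ x : ℝ) = gammaPDFReal 1 1 x := fun x =>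
    Real.coe_toNNReal _ (hpdfnn x)
  have hmeas_eq : expMeasure 1 = volume.withDensity (fun x => (ρ x : ℝ≥0∞)) := rfl
  set h : ℝ → ℝ := fun x => (ρ x : ℝ) * max (x - t) 0 with hhdef
  have hpdf_eq : ∀ x, 0 ≤ x → gammaPDFReal 1 1 x = Real.exp (-x) := by
    intro x hx
    simp [gammaPDFReal, if_pos hx, Real.Gamma_one, Real.one_rpow, Real.rpow_zero]
  have hsupp : ∀ x, x ∉ Ioi t → h x = 0 := by
    intro x hx
    simp only [mem_Ioi, not_lt] at hx
    rcases lt_or_ge x 0 with h0 | h0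
    · have : gammaPDFReal 1 1 x = 0 := by simp [gammaPDFReal, if_neg (not_le.mpr h0)]
      simp [hhdef, hρcoe, this]
    · have : max (x - t) 0 = 0 := max_eq_right (by linarith)
      simp [hhdef, this]
  have heqOn : EqOn h (fun x => (x - t) * Real.exp (-x)) (Ioi t) := by
    intro x hx
    have hx' : t < x := hx
    have hx0 : 0 ≤ x := le_trans ht hx'.le
    simp only [hhdef, hρcoe, hpdf_eq x hx0, max_eq_left (by linarith : (0:ℝ) ≤ x - t)]
    ring
  -- derivative setup
  set G : ℝ → ℝ := fun x => -(x - t + 1) * Real.exp (-x) with hGdef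
  have hderiv : ∀ x ∈ Ici t, HasDerivAt G ((x - t) * Real.exp (-x)) x := by
    intro x _
    have h1 : HasDerivAt (fun x : ℝ => -(x - t + 1)) (-1) x := by
      exact (((hasDerivAt_id x).sub_const t).add_const 1).neg
    have h2 : HasDerivAt (fun x : ℝ => Real.exp (-x)) (-Real.exp (-x)) x := by
      have := (hasDerivAt_neg x).exp; convert this using 1; ring
    have := h1.mul h2
    exact this.congr_deriv (by ring)
  have htend : Tendsto G atTop (𝓝 0) := by
    have l1 : Tendsto (fun x : ℝ => x * Real.exp (-x)) atTop (𝓝 0) := by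
      simpa using Real.tendsto_pow_mul_exp_neg_atTop_nhds_zero 1
    have l2 : Tendsto (fun x : ℝ => -(x * Real.exp (-x)) + (t - 1) * Real.exp (-x))
        atTop (𝓝 (-0 + (t - 1) * 0)) :=
      l1.neg.add (Real.tendsto_exp_neg_atTop_nhds_zero.const_mul _)
    simp only [neg_zero, mul_zero, add_zero] at l2
    exact l2.congr (fun x => by simp only [hGdef]; ring)
  have g'pos : ∀ x ∈ Ioi t, 0 ≤ (x - t) * Real.exp (-x) := fun x hx =>
    mul_nonneg (by simp only [mem_Ioi] at hx; linarith) (Real.exp_pos _).le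
  have hInt : IntegrableOn (fun x => (x - t) * Real.exp (-x)) (Ioi t) :=
    integrableOn_Ioi_deriv_of_nonneg' hderiv g'pos htend
  have hval : ∫ x in Ioi t, (x - t) * Real.exp (-x) = Real.exp (-t) := by
    have := integral_Ioi_of_hasDerivAt_of_nonneg' hderiv g'pos htend
    rw [this]
    simp [hGdef]
  have hsuppsub : Function.support h ⊆ Ioi t := Function.support_subset_iff'.2 hsupp
  have hInth : Integrable h volume := by
    rw [← integrableOn_iff_integrable_of_support_subset hsuppsub]
    exact hInt.congr_fun (fun x hx => (heqOn hx).symm) measurableSet_Ioi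
  constructor
  · rw [hmeas_eq, integrable_withDensity_iff_integrable_smul hρm]
    simpa [hhdef, NNReal.smul_def, smul_eq_mul] using hInth
  · rw [hmeas_eq, integral_withDensity_eq_integral_smul hρm]
    calc ∫ x, ρ x • max (x - t) 0 = ∫ x in Ioi t, h x := by
          rw [setIntegral_eq_integral_of_forall_compl_eq_zero hsupp]
          simp [hhdef, NNReal.smul_def]
      _ = ∫ x in Ioi t, (x - t) * Real.exp (-x) :=
          setIntegral_congr_fun measurableSet_Ioi heqOn
      _ = Real.exp (-t) := hval

lemma expMeanAux :
    Integrable (fun x : ℝ => x) (expMeasure 1) ∧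
    ∫ x, x ∂(expMeasure 1) = 1 := by
  have h0 := expMaxAux 0 le_rfl
  have hae : ∀ᵐ x ∂(expMeasure 1), 0 ≤ x := by
    rw [ae_iff]
    have : {x : ℝ | ¬ 0 ≤ x} = Iio 0 := by ext x; simp
    rw [this]
    show (expMeasure 1) (Iio 0) = 0
    rw [show expMeasure 1 = volume.withDensity (gammaPDF 1 1) from rfl,
      withDensity_apply _ measurableSet_Iio]
    exact lintegral_gammaPDF_of_nonpos le_rfl
  have heq : (fun x : ℝ => x) =ᵐ[expMeasure 1] (fun x => max (x - 0) 0) := by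
    filter_upwards [hae] with x hx
    simp [max_eq_left hx]
  constructor
  · exact h0.1.congr heq.symm
  · rw [integral_congr_ae heq, h0.2]
    simp

end Aux

/-- For `Δ ≥ 2` and all sufficiently large `n`, for every graph on `n` vertices
with maximum degree at most `Δ` and i.i.d. `Exp(1)` node weights,
`1 ≤ E[W(I*)]/|I^M| ≤ 10·log Δ`, where `I*` is the maximum weight independent
set and `I^M` a maximum cardinality independent set. -/
theorem expected_MWIS_ratio (Δ : ℕ) (hΔ : 2 ≤ Δ) :
    ∃ N : ℕ, ∀ n ≥ N,
    ∀ (G : SimpleGraph (Fin n)) (_ : DecidableRel G.Adj),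
      (∀ v, G.degree v ≤ Δ) →
    ∀ (Ω : Type) (_ : MeasurableSpace Ω) (P : Measure Ω),
      IsProbabilityMeasure P →
    ∀ (W : Fin n → Ω → ℝ), (∀ i, Measurable (W i)) →
      iIndepFun W P →
      (∀ i, P.map (W i) = expMeasure 1) →
    ∀ (IM : Finset (Fin n)), (∀ a ∈ IM, ∀ b ∈ IM, ¬ G.Adj a b) →
      (∀ J : Finset (Fin n), (∀ a ∈ J, ∀ b ∈ J, ¬ G.Adj a b) → J.card ≤ IM.card) →
    ∀ (Istar : Ω → Finset (Fin n)),
      (∀ ω, ∀ a ∈ Istar ω, ∀ b ∈ Istar ω, ¬ G.Adj a b) →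
      (∀ ω, ∀ J : Finset (Fin n), (∀ a ∈ J, ∀ b ∈ J, ¬ G.Adj a b) →
        ∑ v ∈ J, W v ω ≤ ∑ v ∈ Istar ω, W v ω) →
      1 ≤ (∫ ω, ∑ v ∈ Istar ω, W v ω ∂P) / IM.card ∧
      (∫ ω, ∑ v ∈ Istar ω, W v ω ∂P) / IM.card ≤ 10 * Real.log Δ := by
  classical
  refine ⟨1, fun n hn G hGdec hdeg Ω mΩ P hP W hWmeas hindep hmap IM hIMind hIMmax
    Istar hIind hImax => ?_⟩
  haveI := hP
  set t : ℝ := Real.log (Δ + 1) with htdef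
  have hΔR : (2:ℝ) ≤ (Δ:ℝ) := by exact_mod_cast hΔ
  have htpos : 0 < t := Real.log_pos (by linarith)
  -- per-vertex integrability and means
  have hWint : ∀ i, Integrable (W i) P := by
    intro i
    have h1 : Integrable (fun x : ℝ => x) (P.map (W i)) := by
      rw [hmap i]; exact expMeanAux.1
    exact (integrable_map_measure aestronglyMeasurable_id (hWmeas i).aemeasurable).mp h1
  have hWmean : ∀ i, ∫ ω, W i ω ∂P = 1 := by
    intro i
    have := integral_map (μ := P) (hWmeas i).aemeasurable
      (f := fun x : ℝ => x) aestronglyMeasurable_id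
    rw [← this, hmap i]
    exact expMeanAux.2
  have hmaxmeas : Measurable (fun x : ℝ => max (x - t) 0) :=
    (measurable_id.sub_const t).max measurable_const
  have hWmaxint : ∀ i, Integrable (fun ω => max (W i ω - t) 0) P := by
    intro i
    have h1 : Integrable (fun x : ℝ => max (x - t) 0) (P.map (W i)) := by
      rw [hmap i]; exact (expMaxAux t htpos.le).1
    exact (integrable_map_measure hmaxmeas.aestronglyMeasurable
      (hWmeas i).aemeasurable).mp h1
  have hWmaxval : ∀ i, ∫ ω, max (W i ω - t) 0 ∂P = Real.exp (-t) := by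
    intro i
    have := integral_map (μ := P) (hWmeas i).aemeasurable
      (f := fun x : ℝ => max (x - t) 0) hmaxmeas.aestronglyMeasurable
    rw [← this, hmap i]
    exact (expMaxAux t htpos.le).2
  -- the finite family of independent sets
  set S : Finset (Finset (Fin n)) :=
    Finset.univ.filter (fun J => ∀ a ∈ J, ∀ b ∈ J, ¬ G.Adj a b) with hSdef
  have hmemS : ∀ J : Finset (Fin n), J ∈ S ↔ (∀ a ∈ J, ∀ b ∈ J, ¬ G.Adj a b) := by
    intro J; simp [hSdef]
  have hSne : S.Nonempty := ⟨∅, (hmemS ∅).mpr (by simp)⟩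
  set f : Ω → ℝ := fun ω => S.sup' hSne (fun J => ∑ v ∈ J, W v ω) with hfdef
  have hfm : Measurable f := by
    have h : f = S.sup' hSne (fun J => fun ω => ∑ v ∈ J, W v ω) := by
      funext ω
      exact (Finset.sup'_apply (C := fun _ : Ω => ℝ) hSne
        (fun J => fun ω => ∑ v ∈ J, W v ω) ω).symm
    rw [h]
    exact Finset.measurable_sup' hSne (fun J _ => Finset.measurable_sum _ (fun v _ => hWmeas v))
  have hIstarS : ∀ ω, Istar ω ∈ S := fun ω => (hmemS _).mpr (hIind ω)
  have hIMS : IM ∈ S := (hmemS _).mpr hIMind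
  have hfeq : (fun ω => ∑ v ∈ Istar ω, W v ω) = f := by
    funext ω
    refine le_antisymm (Finset.le_sup' (fun J => ∑ v ∈ J, W v ω) (hIstarS ω))
      (Finset.sup'_le _ _ fun J hJ => ?_)
    exact hImax ω J ((hmemS J).mp hJ)
  have hfnn : ∀ ω, 0 ≤ f ω := by
    intro ω
    have h := Finset.le_sup' (fun J => ∑ v ∈ J, W v ω) ((hmemS ∅).mpr (by simp))
    simpa only [Finset.sum_empty] using h
  have hintf : Integrable f P := by
    refine Integrable.mono' (integrable_finset_sum Finset.univ (fun v _ => (hWint v).abs))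
      hfm.aestronglyMeasurable (Filter.Eventually.of_forall fun ω => ?_)
    rw [Real.norm_eq_abs, abs_of_nonneg (hfnn ω)]
    refine Finset.sup'_le _ _ fun J _ => ?_
    calc ∑ v ∈ J, W v ω ≤ ∑ v ∈ J, |W v ω| := Finset.sum_le_sum fun v _ => le_abs_self _
      _ ≤ ∑ v ∈ Finset.univ, |W v ω| :=
        Finset.sum_le_sum_of_subset_of_nonneg (Finset.subset_univ J)
          (fun v _ _ => abs_nonneg _)
  -- cardinality facts
  have hcard1 : 1 ≤ IM.card := by
    have hn1 : 0 < n := hn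
    set v0 : Fin n := ⟨0, hn1⟩
    have := hIMmax {v0} (by
      intro a ha b hb
      simp only [Finset.mem_singleton] at ha hb
      subst ha; subst hb; exact G.loopless.irrefl _)
    simpa using this
  have hcardpos : (0:ℝ) < IM.card := by exact_mod_cast hcard1
  have hnle : (n:ℝ) ≤ (IM.card : ℝ) * ((Δ:ℝ) + 1) := by
    have hcover : (Finset.univ : Finset (Fin n)) ⊆
        IM.biUnion (fun u => insert u (G.neighborFinset u)) := by
      intro v _
      by_contra hv
      rw [Finset.mem_biUnion] at hv
      push_neg at hv
      have hvIM : v ∉ IM := fun h => hv v h (Finset.mem_insert_self v _)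
      have hvadj : ∀ u ∈ IM, ¬ G.Adj u v := fun u hu hadj =>
        hv u hu (Finset.mem_insert_of_mem ((SimpleGraph.mem_neighborFinset G u v).mpr hadj))
      have hins : ∀ a ∈ insert v IM, ∀ b ∈ insert v IM, ¬ G.Adj a b := by
        intro a ha b hb hadj
        rcases Finset.mem_insert.mp ha with ha' | ha'
        · rcases Finset.mem_insert.mp hb with hb' | hb'
          · rw [ha', hb'] at hadj; exact G.loopless.irrefl _ hadj
          · rw [ha'] at hadj; exact hvadj b hb' hadj.symm
        · rcases Finset.mem_insert.mp hb with hb' | hb'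
          · rw [hb'] at hadj; exact hvadj a ha' hadj
          · exact hIMind a ha' b hb' hadj
      have := hIMmax _ hins
      rw [Finset.card_insert_of_notMem hvIM] at this
      omega
    have h1 : n ≤ (IM.biUnion (fun u => insert u (G.neighborFinset u))).card := by
      have := Finset.card_le_card hcover
      simpa using this
    have h2 : (IM.biUnion (fun u => insert u (G.neighborFinset u))).card ≤
        ∑ u ∈ IM, (insert u (G.neighborFinset u)).card := Finset.card_biUnion_le
    have h3 : ∑ u ∈ IM, (insert u (G.neighborFinset u)).card ≤ IM.card * (Δ + 1) := by
      calc ∑ u ∈ IM, (insert u (G.neighborFinset u)).card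
          ≤ ∑ _u ∈ IM, (Δ + 1) := by
            refine Finset.sum_le_sum fun u _ => ?_
            have h4 := Finset.card_insert_le u (G.neighborFinset u)
            have h5 : (G.neighborFinset u).card ≤ Δ := by
              rw [SimpleGraph.card_neighborFinset_eq_degree]
              exact hdeg u
            omega
        _ = IM.card * (Δ + 1) := by rw [Finset.sum_const, smul_eq_mul]
    have : n ≤ IM.card * (Δ + 1) := le_trans h1 (le_trans h2 h3)
    exact_mod_cast this
  -- rewrite the integrand
  rw [hfeq]
  -- lower bound
  have hlow : (IM.card : ℝ) ≤ ∫ ω, f ω ∂P := by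
    have hIMsum : ∫ ω, ∑ v ∈ IM, W v ω ∂P = IM.card := by
      rw [integral_finset_sum _ (fun v _ => hWint v)]
      simp [hWmean]
    rw [← hIMsum]
    exact integral_mono (integrable_finset_sum _ fun v _ => hWint v) hintf
      (fun ω => Finset.le_sup' (fun J => ∑ v ∈ J, W v ω) hIMS)
  -- upper bound
  have hup : ∫ ω, f ω ∂P ≤ (IM.card : ℝ) * t + n * Real.exp (-t) := by
    have hrhs : Integrable (fun ω => (IM.card : ℝ) * t + ∑ v, max (W v ω - t) 0) P :=
      (integrable_const _).add (integrable_finset_sum _ fun v _ => hWmaxint v)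
    have hpt : ∀ ω, f ω ≤ (IM.card : ℝ) * t + ∑ v, max (W v ω - t) 0 := by
      intro ω
      refine Finset.sup'_le _ _ fun J hJ => ?_
      have hJcard : (J.card : ℝ) ≤ (IM.card : ℝ) := by
        exact_mod_cast hIMmax J ((hmemS J).mp hJ)
      calc ∑ v ∈ J, W v ω ≤ ∑ v ∈ J, (t + max (W v ω - t) 0) := by
            refine Finset.sum_le_sum fun v _ => ?_
            have := le_max_left (W v ω - t) (0:ℝ)
            linarith
        _ = (J.card : ℝ) * t + ∑ v ∈ J, max (W v ω - t) 0 := by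
            rw [Finset.sum_add_distrib, Finset.sum_const, nsmul_eq_mul]
        _ ≤ (IM.card : ℝ) * t + ∑ v ∈ Finset.univ, max (W v ω - t) 0 := by
            have hsub : ∑ v ∈ J, max (W v ω - t) 0 ≤
                ∑ v ∈ Finset.univ, max (W v ω - t) 0 :=
              Finset.sum_le_sum_of_subset_of_nonneg (Finset.subset_univ J)
                (fun v _ _ => le_max_right _ _)
            have := mul_le_mul_of_nonneg_right hJcard htpos.le
            linarith
    calc ∫ ω, f ω ∂P ≤ ∫ ω, ((IM.card : ℝ) * t + ∑ v, max (W v ω - t) 0) ∂P :=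
          integral_mono hintf hrhs hpt
      _ = (IM.card : ℝ) * t + n * Real.exp (-t) := by
          rw [integral_add (integrable_const _) (integrable_finset_sum _ fun v _ => hWmaxint v),
            integral_const, integral_finset_sum _ (fun v _ => hWmaxint v)]
          simp [hWmaxval, Finset.card_univ]
  -- arithmetic conclusion
  have hexp : Real.exp (-t) = ((Δ:ℝ) + 1)⁻¹ := by
    rw [htdef, Real.exp_neg, Real.exp_log (by linarith)]
  have hlog2 : (0.6:ℝ) < Real.log 2 := by
    have := Real.log_two_gt_d9
    linarith
  have hlogΔ : Real.log 2 ≤ Real.log Δ := Real.log_le_log (by norm_num) hΔR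
  have ht2 : t ≤ 2 * Real.log Δ := by
    rw [htdef]
    have h1 : (Δ:ℝ) + 1 ≤ (Δ:ℝ) ^ 2 := by nlinarith
    calc Real.log ((Δ:ℝ) + 1) ≤ Real.log ((Δ:ℝ) ^ 2) := Real.log_le_log (by linarith) h1
      _ = 2 * Real.log Δ := by rw [Real.log_pow]; push_cast; ring
  have hnexp : (n:ℝ) * Real.exp (-t) ≤ (IM.card : ℝ) := by
    rw [hexp]
    have hpos : (0:ℝ) < (Δ:ℝ) + 1 := by linarith
    rw [← div_eq_mul_inv, div_le_iff₀ hpos]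
    linarith [hnle]
  constructor
  · rw [le_div_iff₀ hcardpos, one_mul]
    exact hlow
  · rw [div_le_iff₀ hcardpos]
    have hfin : ∫ ω, f ω ∂P ≤ (IM.card : ℝ) * (t + 1) := by
      have := hnexp
      linarith [hup]
    have harith : t + 1 ≤ 10 * Real.log Δ := by
      have h1 : (1:ℝ) ≤ 2 * Real.log Δ := by linarith
      linarith
    calc ∫ ω, f ω ∂P ≤ (IM.card : ℝ) * (t + 1) := hfin
      _ ≤ (IM.card : ℝ) * (10 * Real.log Δ) := by
          exact mul_le_mul_of_nonneg_left harith hcardpos.le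
      _ = 10 * Real.log Δ * (IM.card : ℝ) := by ring
end

section
/- Define sequences by the recursions C⁻(i,0) = 0, C⁺(i,0) = W_i, and for r ≥ 1, C^±_H(i,r) = max(0, W_i − Σ_l C^±_{H∖{i,i_1,…,i_{l−1}}}(i_l, r−1)), and let C_H(i) satisfy the exact recursion C_H(i) = max(0, W_i − Σ_l C_{H∖{i,i_1,…,i_{l−1}}}(i_l)). Then for every even r, C⁻_H(i,r) ≤ C_H(i) ≤ C⁺_H(i,r), and for every odd r, C⁺_H(i,r) ≤ C_H(i) ≤ C⁻_H(i,r). -/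
variable {V : Type*} [DecidableEq V]

/-- `cavSum C H [i₁,…,i_d] = Σ_l C_{H∖{i₁,…,i_{l−1}}}(i_l)`:
the sum of cavities where the previously processed neighbors are removed. -/
def cavSum (C : Finset V → V → ℝ) : Finset V → List V → ℝ
  | _, [] => 0
  | H, a :: L => C H a + cavSum C (H.erase a) L

/-- The `r`-indexed version of `cavSum` for the approximate cavities. -/
def cavSumR (C : Finset V → V → ℕ → ℝ) (r : ℕ) : Finset V → List V → ℝ
  | _, [] => 0
  | H, a :: L => C H a r + cavSumR C r (H.erase a) L

lemma cavSum_nonneg (C : Finset V → V → ℝ) (h : ∀ H i, 0 ≤ C H i) :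
    ∀ (H : Finset V) (L : List V), 0 ≤ cavSum C H L := by
  intro H L
  induction L generalizing H with
  | nil => simp [cavSum]
  | cons a L ih => simpa [cavSum] using add_nonneg (h H a) (ih (H.erase a))

lemma cavSumR_le_cavSum (C' : Finset V → V → ℕ → ℝ) (C : Finset V → V → ℝ) (r : ℕ)
    (h : ∀ H i, C' H i r ≤ C H i) :
    ∀ (H : Finset V) (L : List V), cavSumR C' r H L ≤ cavSum C H L := by
  intro H L
  induction L generalizing H with
  | nil => simp [cavSum, cavSumR]
  | cons a L ih =>
      simpa [cavSum, cavSumR] using add_le_add (h H a) (ih (H.erase a))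

lemma cavSum_le_cavSumR (C' : Finset V → V → ℕ → ℝ) (C : Finset V → V → ℝ) (r : ℕ)
    (h : ∀ H i, C H i ≤ C' H i r) :
    ∀ (H : Finset V) (L : List V), cavSum C H L ≤ cavSumR C' r H L := by
  intro H L
  induction L generalizing H with
  | nil => simp [cavSum, cavSumR]
  | cons a L ih =>
      simpa [cavSum, cavSumR] using add_le_add (h H a) (ih (H.erase a))

/-- The bounded cavity recursions `C⁻, C⁺` with boundary conditions `0` and `W_i`
sandwich the exact cavity `C`: at even depths `C⁻ ≤ C ≤ C⁺`, at odd depths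
`C⁺ ≤ C ≤ C⁻`. -/
theorem cavity_bounds (W : V → ℝ) (hW : ∀ i, 0 ≤ W i)
    (nbrs : Finset V → V → List V)
    (C : Finset V → V → ℝ) (Cm Cp : Finset V → V → ℕ → ℝ)
    (hC : ∀ H i, C H i = max 0 (W i - cavSum C (H.erase i) (nbrs H i)))
    (hCm0 : ∀ H i, Cm H i 0 = 0) (hCp0 : ∀ H i, Cp H i 0 = W i)
    (hCm : ∀ H i r, Cm H i (r + 1) =
      max 0 (W i - cavSumR Cm r (H.erase i) (nbrs H i)))
    (hCp : ∀ H i r, Cp H i (r + 1) =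
      max 0 (W i - cavSumR Cp r (H.erase i) (nbrs H i))) :
    ∀ (H : Finset V) (i : V) (r : ℕ),
      (Even r → Cm H i r ≤ C H i ∧ C H i ≤ Cp H i r) ∧
      (Odd r → Cp H i r ≤ C H i ∧ C H i ≤ Cm H i r) := by
  have hC0 : ∀ H i, 0 ≤ C H i := fun H i => (hC H i) ▸ le_max_left _ _
  have hCW : ∀ H i, C H i ≤ W i := by
    intro H i
    rw [hC H i]
    exact max_le (hW i) (by linarith [cavSum_nonneg C hC0 (H.erase i) (nbrs H i)])
  suffices key : ∀ (r : ℕ) (H : Finset V) (i : V),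
      (Even r → Cm H i r ≤ C H i ∧ C H i ≤ Cp H i r) ∧
      (Odd r → Cp H i r ≤ C H i ∧ C H i ≤ Cm H i r) by
    intro H i r; exact key r H i
  intro r
  induction r with
  | zero =>
      intro H i
      refine ⟨fun _ => ⟨?_, ?_⟩, fun h => absurd h (by simp)⟩
      · rw [hCm0]; exact hC0 H i
      · rw [hCp0]; exact hCW H i
  | succ r ih =>
      intro H i
      constructor
      · -- r+1 even, so r odd: Cp r ≤ C ≤ Cm r
        intro he
        have ho : Odd r := by
          rcases Nat.even_add_one.mp he with h
          exact Nat.not_even_iff_odd.mp h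
        have h1 : ∀ H i, Cp H i r ≤ C H i := fun H i => ((ih H i).2 ho).1
        have h2 : ∀ H i, C H i ≤ Cm H i r := fun H i => ((ih H i).2 ho).2
        constructor
        · rw [hCm H i r, hC H i]
          exact max_le_max le_rfl (by
            have := cavSum_le_cavSumR Cm C r h2 (H.erase i) (nbrs H i); linarith)
        · rw [hCp H i r, hC H i]
          exact max_le_max le_rfl (by
            have := cavSumR_le_cavSum Cp C r h1 (H.erase i) (nbrs H i); linarith)
      · -- r+1 odd, so r even: Cm r ≤ C ≤ Cp r
        intro ho
        have he : Even r := Nat.not_odd_iff_even.mp (Nat.odd_add_one.mp ho)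
        have h1 : ∀ H i, Cm H i r ≤ C H i := fun H i => ((ih H i).1 he).1
        have h2 : ∀ H i, C H i ≤ Cp H i r := fun H i => ((ih H i).1 he).2
        constructor
        · rw [hCp H i r, hC H i]
          exact max_le_max le_rfl (by
            have := cavSum_le_cavSumR Cp C r h2 (H.erase i) (nbrs H i); linarith)
        · rw [hCm H i r, hC H i]
          exact max_le_max le_rfl (by
            have := cavSumR_le_cavSum Cm C r h1 (H.erase i) (nbrs H i); linarith)
end

section
/- Let G = (V, E, W) be a finite graph with nonnegative vertex weights, J_H the maximum weight of an independent set in an induced subgraph H, and C_G(i) = J_G − J_{G∖{i}}. For a node i with neighbors i_1,…,i_d, it holds that C_G(i) = max(0, W_i − Σ_{l=1}^{d} C_{G∖{i,i_1,…,i_{l−1}}}(i_l)). -/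
variable {V : Type*} [DecidableEq V]

open Classical in
/-- `maxWeight G W H` is the maximum weight `J_H` of an independent set of the
induced subgraph of `G` on `H`. -/
noncomputable def maxWeight (G : SimpleGraph V) (W : V → ℝ) (H : Finset V) : ℝ :=
  (H.powerset.filter (fun S => ∀ a ∈ S, ∀ b ∈ S, ¬ G.Adj a b)).sup'
    ⟨∅, by simp⟩ (fun S => ∑ v ∈ S, W v)

open Classical in
lemma mem_indep {G : SimpleGraph V} {H S : Finset V} :
    S ∈ (H.powerset.filter (fun S => ∀ a ∈ S, ∀ b ∈ S, ¬ G.Adj a b)) ↔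
    S ⊆ H ∧ ∀ a ∈ S, ∀ b ∈ S, ¬ G.Adj a b := by
  simp

lemma le_maxWeight (G : SimpleGraph V) (W : V → ℝ) {H S : Finset V}
    (hS : S ⊆ H) (hI : ∀ a ∈ S, ∀ b ∈ S, ¬ G.Adj a b) :
    ∑ v ∈ S, W v ≤ maxWeight G W H := by
  unfold maxWeight
  exact Finset.le_sup' (fun S => ∑ v ∈ S, W v) (mem_indep.2 ⟨hS, hI⟩)

lemma maxWeight_le (G : SimpleGraph V) (W : V → ℝ) {H : Finset V} {x : ℝ}
    (h : ∀ S ⊆ H, (∀ a ∈ S, ∀ b ∈ S, ¬ G.Adj a b) → ∑ v ∈ S, W v ≤ x) :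
    maxWeight G W H ≤ x := by
  unfold maxWeight
  exact Finset.sup'_le _ _ fun S hS => by
    rw [mem_indep] at hS; exact h S hS.1 hS.2

lemma maxWeight_mono (G : SimpleGraph V) (W : V → ℝ) {H H' : Finset V} (h : H ⊆ H') :
    maxWeight G W H ≤ maxWeight G W H' :=
  maxWeight_le G W fun S hS hI => le_maxWeight G W (hS.trans h) hI

lemma cavSum_telescope (G : SimpleGraph V) (W : V → ℝ) (H : Finset V) (L : List V) :
    cavSum (fun H j => maxWeight G W H - maxWeight G W (H.erase j)) H L
      = maxWeight G W H - maxWeight G W (L.foldl Finset.erase H) := by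
  induction L generalizing H with
  | nil => simp [cavSum]
  | cons a L ih =>
    simp only [cavSum, List.foldl_cons, ih]
    ring

lemma foldl_erase_eq_sdiff (H : Finset V) (L : List V) :
    L.foldl Finset.erase H = H \ L.toFinset := by
  induction L generalizing H with
  | nil => simp
  | cons a L ih =>
    rw [List.foldl_cons, ih]
    ext x
    simp only [Finset.mem_sdiff, Finset.mem_erase, List.toFinset_cons,
      Finset.mem_insert]
    tauto

/-- Exact cavity recursion for maximum weight independent sets:
`C_G(i) = max(0, W_i − Σ_l C_{G∖{i,i₁,…,i_{l−1}}}(i_l))` where `i₁,…,i_d` are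
the neighbors of `i`. -/
theorem cavity_recursion_MWIS [Fintype V] (G : SimpleGraph V) (W : V → ℝ)
    (hW : ∀ v, 0 ≤ W v) (i : V) (L : List V) (hnd : L.Nodup)
    (hL : ∀ v, v ∈ L ↔ G.Adj i v) :
    maxWeight G W Finset.univ - maxWeight G W (Finset.univ.erase i) =
      max 0 (W i - cavSum (fun H j => maxWeight G W H - maxWeight G W (H.erase j))
        (Finset.univ.erase i) L) := by
  set K : Finset V := (Finset.univ.erase i) \ L.toFinset with hK
  have hmemK : ∀ x, x ∈ K ↔ x ≠ i ∧ ¬ G.Adj i x := by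
    intro x
    simp [hK, Finset.mem_sdiff, Finset.mem_erase, hL]
  -- key: J(univ) = max (J(univ.erase i)) (W i + J K)
  have hkey : maxWeight G W Finset.univ =
      max (maxWeight G W (Finset.univ.erase i)) (W i + maxWeight G W K) := by
    apply le_antisymm
    · apply maxWeight_le
      intro S _ hI
      by_cases hiS : i ∈ S
      · refine le_trans ?_ (le_max_right _ _)
        rw [← Finset.add_sum_erase S W hiS]
        gcongr
        apply le_maxWeight G W ?_ (fun a ha b hb => hI a (Finset.mem_of_mem_erase ha) b
          (Finset.mem_of_mem_erase hb))
        intro x hx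
        rw [hmemK]
        exact ⟨(Finset.mem_erase.1 hx).1, hI i hiS x (Finset.mem_of_mem_erase hx)⟩
      · refine le_trans ?_ (le_max_left _ _)
        exact le_maxWeight G W (fun x hx => Finset.mem_erase.2
          ⟨fun h => hiS (h ▸ hx), Finset.mem_univ x⟩) hI
    · apply max_le
      · exact maxWeight_mono G W (Finset.erase_subset _ _)
      · rw [← sub_nonneg, show maxWeight G W Finset.univ - (W i + maxWeight G W K)
          = maxWeight G W Finset.univ - W i - maxWeight G W K by ring, sub_nonneg]
        apply maxWeight_le
        intro S hSK hI
        rw [le_sub_iff_add_le]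
        have hiS : i ∉ S := fun h => ((hmemK i).1 (hSK h)).1 rfl
        have : ∑ v ∈ S, W v + W i = ∑ v ∈ insert i S, W v := by
          rw [Finset.sum_insert hiS]; ring
        rw [this]
        apply le_maxWeight G W (Finset.subset_univ _)
        intro a ha b hb hadj
        rcases Finset.mem_insert.1 ha with ha | ha <;>
          rcases Finset.mem_insert.1 hb with hb | hb
        · exact G.irrefl (ha ▸ hb ▸ hadj)
        · exact ((hmemK b).1 (hSK hb)).2 (ha ▸ hadj)
        · exact ((hmemK a).1 (hSK ha)).2 (hb ▸ hadj).symm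
        · exact hI a ha b hb hadj
  have htel := cavSum_telescope G W (Finset.univ.erase i) L
  rw [foldl_erase_eq_sdiff] at htel
  rw [htel, ← hK, hkey]
  rcases le_total (maxWeight G W (Finset.univ.erase i)) (W i + maxWeight G W K) with h | h
  · rw [max_eq_right h, max_eq_right (by linarith)]
    ring
  · rw [max_eq_left h, max_eq_left (by linarith)]
    ring
end

section
/- Let T ≥ 2, and for each pair x ≠ y in a finite action set χ of size T, suppose real random variables satisfy: P(|B(x)−B(y)| ≤ ε) ≤ 2gε and E|B(x)−B̂(x)| ≤ ρ for all x, for constants g, ρ > 0 and any ε > 0. Let x* = argmax_x B(x) and x̂ = argmax_x B̂(x) (assume the argmax of B is a.s. unique). Then P(x̂ ≠ x*) ≤ T²(gε + 2ρ/ε) for every ε > 0, and in particular P(x̂ ≠ x*) ≤ 2T²√(2gρ). -/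
open MeasureTheory ProbabilityTheory

/-- If the true cavities `B` have anticoncentrated pairwise differences
(`P(|B(x)−B(y)| ≤ ε) ≤ 2gε`) and the approximate cavities `B̂` satisfy
`E|B(x)−B̂(x)| ≤ ρ`, then the approximate argmax `x̂` differs from the (a.s.
unique) true argmax `x*` with probability at most `T²(gε + 2ρ/ε)` for every
`ε > 0`, and hence at most `2T²√(2gρ)`. -/
theorem approx_argmax_error
    {Ω : Type*} [MeasurableSpace Ω] (P : Measure Ω) [IsProbabilityMeasure P]
    (T : ℕ) (hT : 2 ≤ T) (B Bhat : Fin T → Ω → ℝ)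
    (hBmeas : ∀ x, Measurable (B x)) (hBhatmeas : ∀ x, Measurable (Bhat x))
    (hint : ∀ x, Integrable (fun ω => B x ω - Bhat x ω) P)
    (g ρ : ℝ) (hg : 0 < g) (hρ : 0 < ρ)
    (hpair : ∀ x y : Fin T, x ≠ y → ∀ ε > (0:ℝ),
      P {ω | |B x ω - B y ω| ≤ ε} ≤ ENNReal.ofReal (2 * g * ε))
    (happrox : ∀ x, ∫ ω, |B x ω - Bhat x ω| ∂P ≤ ρ)
    (xstar xhat : Ω → Fin T)
    (hstar : ∀ᵐ ω ∂P, ∀ y, y ≠ xstar ω → B y ω < B (xstar ω) ω)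
    (hhat : ∀ ω, ∀ y, Bhat y ω ≤ Bhat (xhat ω) ω) :
    (∀ ε > (0:ℝ), P {ω | xhat ω ≠ xstar ω} ≤
      ENNReal.ofReal ((T : ℝ)^2 * (g * ε + 2 * ρ / ε))) ∧
    P {ω | xhat ω ≠ xstar ω} ≤
      ENNReal.ofReal (2 * (T : ℝ)^2 * Real.sqrt (2 * g * ρ)) := by
  have key : ∀ ε > (0:ℝ), P {ω | xhat ω ≠ xstar ω} ≤
      ENNReal.ofReal ((T : ℝ)^2 * (g * ε + 2 * ρ / ε)) := by
    intro ε hε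
    set S : Finset (Fin T × Fin T) :=
      Finset.univ.filter (fun p => p.1 < p.2) with hSdef
    set A : Set Ω := ⋃ p ∈ S, {ω | |B p.1 ω - B p.2 ω| ≤ ε} with hAdef
    set C : Set Ω := ⋃ z : Fin T, {ω | ε/2 < |B z ω - Bhat z ω|} with hCdef
    -- inclusion of the bad event in A ∪ C, a.e.
    have hsub : {ω | xhat ω ≠ xstar ω} ≤ᶠ[ae P] ((A ∪ C : Set Ω) : Set Ω) := by
      filter_upwards [hstar] with ω hω hne
      by_cases hx : ε/2 < |B (xstar ω) ω - Bhat (xstar ω) ω|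
      · exact Or.inr (Set.mem_iUnion.2 ⟨xstar ω, hx⟩)
      by_cases hy : ε/2 < |B (xhat ω) ω - Bhat (xhat ω) ω|
      · exact Or.inr (Set.mem_iUnion.2 ⟨xhat ω, hy⟩)
      push_neg at hx hy
      left
      have hlt := hω (xhat ω) hne
      have hble := hhat ω (xstar ω)
      obtain ⟨hx1, hx2⟩ := abs_le.mp hx
      obtain ⟨hy1, hy2⟩ := abs_le.mp hy
      have habs : |B (xstar ω) ω - B (xhat ω) ω| ≤ ε := by
        rw [abs_of_pos (by linarith)]; linarith
      rcases lt_trichotomy (xstar ω) (xhat ω) with h | h | h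
      · simp only [hAdef, Set.mem_iUnion]
        exact ⟨(xstar ω, xhat ω), by simp [hSdef, h], habs⟩
      · exact absurd h.symm hne
      · simp only [hAdef, Set.mem_iUnion]
        exact ⟨(xhat ω, xstar ω), by simp [hSdef, h], by show |B (xhat ω) ω - B (xstar ω) ω| ≤ ε; rw [abs_sub_comm]; exact habs⟩
      -- done inclusion
    -- bound on A
    have hcard : 2 * S.card ≤ T ^ 2 := by
      set S' : Finset (Fin T × Fin T) :=
        Finset.univ.filter (fun p => p.2 < p.1) with hS'def
      have hc : S.card = S'.card := by
        refine Finset.card_bij' (fun p _ => (p.2, p.1)) (fun p _ => (p.2, p.1))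
          ?_ ?_ ?_ ?_
        · intro a ha; simp only [hSdef, Finset.mem_filter] at ha
          simp [hS'def, ha.2]
        · intro a ha; simp only [hS'def, Finset.mem_filter] at ha
          simp [hSdef, ha.2]
        · intro a _; rfl
        · intro a _; rfl
      have hdisj : Disjoint S S' := by
        rw [Finset.disjoint_left]
        intro p hp hp'
        simp only [hSdef, Finset.mem_filter] at hp
        simp only [hS'def, Finset.mem_filter] at hp'
        exact absurd hp'.2 (lt_asymm hp.2)
      have hun : (S ∪ S').card ≤ T * T := by
        calc (S ∪ S').card ≤ (Finset.univ : Finset (Fin T × Fin T)).card :=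
              Finset.card_le_card (Finset.subset_univ _)
          _ = T * T := by simp
      rw [Finset.card_union_of_disjoint hdisj] at hun
      nlinarith [hc]
    have hA : P A ≤ ENNReal.ofReal ((T : ℝ)^2 * (g * ε)) := by
      calc P A ≤ ∑ p ∈ S, P {ω | |B p.1 ω - B p.2 ω| ≤ ε} :=
            measure_biUnion_finset_le S _
        _ ≤ ∑ _p ∈ S, ENNReal.ofReal (2 * g * ε) := by
            refine Finset.sum_le_sum fun p hp => ?_
            simp only [hSdef, Finset.mem_filter] at hp
            exact hpair p.1 p.2 (ne_of_lt hp.2) ε hε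
        _ = (S.card : ENNReal) * ENNReal.ofReal (2 * g * ε) := by
            rw [Finset.sum_const, nsmul_eq_mul]
        _ = ENNReal.ofReal ((S.card : ℝ) * (2 * g * ε)) := by
            rw [← ENNReal.ofReal_natCast S.card,
              ← ENNReal.ofReal_mul (Nat.cast_nonneg _)]
        _ ≤ ENNReal.ofReal ((T : ℝ)^2 * (g * ε)) := by
            apply ENNReal.ofReal_le_ofReal
            have : (2 * S.card : ℝ) ≤ (T : ℝ)^2 := by
              exact_mod_cast hcard
            nlinarith [mul_le_mul_of_nonneg_right this (mul_pos hg hε).le]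
    -- Markov bound on C
    have hmark : ∀ z : Fin T, P {ω | ε/2 < |B z ω - Bhat z ω|} ≤
        ENNReal.ofReal (2 * ρ / ε) := by
      intro z
      have hfm : AEMeasurable (fun ω => ENNReal.ofReal |B z ω - Bhat z ω|) P :=
        (((hBmeas z).sub (hBhatmeas z)).abs.ennreal_ofReal).aemeasurable
      have ha0 : ENNReal.ofReal (ε/2) ≠ 0 :=
        (ENNReal.ofReal_pos.2 (by linarith)).ne'
      have hmk := meas_ge_le_lintegral_div hfm ha0 ENNReal.ofReal_ne_top
      have hsub' : {ω | ε/2 < |B z ω - Bhat z ω|} ⊆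
          {ω | ENNReal.ofReal (ε/2) ≤ ENNReal.ofReal |B z ω - Bhat z ω|} :=
        fun ω hω => ENNReal.ofReal_le_ofReal (le_of_lt hω)
      have hlint : ∫⁻ ω, ENNReal.ofReal |B z ω - Bhat z ω| ∂P ≤
          ENNReal.ofReal ρ := by
        rw [← ofReal_integral_eq_lintegral_ofReal (hint z).abs
          (Filter.Eventually.of_forall fun ω => abs_nonneg _)]
        exact ENNReal.ofReal_le_ofReal (happrox z)
      calc P {ω | ε/2 < |B z ω - Bhat z ω|} ≤
            P {ω | ENNReal.ofReal (ε/2) ≤ ENNReal.ofReal |B z ω - Bhat z ω|} :=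
            measure_mono hsub'
        _ ≤ (∫⁻ ω, ENNReal.ofReal |B z ω - Bhat z ω| ∂P) /
              ENNReal.ofReal (ε/2) := hmk
        _ ≤ ENNReal.ofReal ρ / ENNReal.ofReal (ε/2) := by
            exact ENNReal.div_le_div_right hlint _
        _ = ENNReal.ofReal (ρ / (ε/2)) :=
            (ENNReal.ofReal_div_of_pos (by linarith)).symm
        _ = ENNReal.ofReal (2 * ρ / ε) := by
            congr 1; field_simp
    have hC : P C ≤ ENNReal.ofReal ((T : ℝ)^2 * (2 * ρ / ε)) := by
      calc P C ≤ ∑ z : Fin T, P {ω | ε/2 < |B z ω - Bhat z ω|} :=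
            measure_iUnion_fintype_le P _
        _ ≤ ∑ _z : Fin T, ENNReal.ofReal (2 * ρ / ε) :=
            Finset.sum_le_sum fun z _ => hmark z
        _ = (T : ENNReal) * ENNReal.ofReal (2 * ρ / ε) := by
            rw [Finset.sum_const, nsmul_eq_mul]; simp
        _ = ENNReal.ofReal ((T : ℝ) * (2 * ρ / ε)) := by
            rw [← ENNReal.ofReal_natCast T,
              ← ENNReal.ofReal_mul (Nat.cast_nonneg _)]
        _ ≤ ENNReal.ofReal ((T : ℝ)^2 * (2 * ρ / ε)) := by
            apply ENNReal.ofReal_le_ofReal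
            have h1 : (T : ℝ) ≤ (T : ℝ)^2 := by
              nlinarith [show (1:ℝ) ≤ (T:ℝ) by exact_mod_cast le_trans one_le_two hT]
            have h2 : (0:ℝ) ≤ 2 * ρ / ε := by positivity
            nlinarith
    calc P {ω | xhat ω ≠ xstar ω} ≤ P (A ∪ C) := measure_mono_ae hsub
      _ ≤ P A + P C := measure_union_le _ _
      _ ≤ ENNReal.ofReal ((T : ℝ)^2 * (g * ε)) +
            ENNReal.ofReal ((T : ℝ)^2 * (2 * ρ / ε)) := add_le_add hA hC
      _ = ENNReal.ofReal ((T : ℝ)^2 * (g * ε + 2 * ρ / ε)) := by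
          rw [← ENNReal.ofReal_add (by positivity) (by positivity)]
          ring_nf
  refine ⟨key, ?_⟩
  set s := Real.sqrt (2 * g * ρ) with hsdef
  have hs0 : 0 < s := Real.sqrt_pos.2 (by positivity)
  have hs2 : s * s = 2 * g * ρ := Real.mul_self_sqrt (by positivity)
  have hε0 : 0 < s / g := by positivity
  have := key (s / g) hε0
  have heq : (T : ℝ)^2 * (g * (s / g) + 2 * ρ / (s / g)) =
      2 * (T : ℝ)^2 * s := by
    have h1 : g * (s / g) = s := by field_simp
    have h2 : 2 * ρ / (s / g) = s := by
      rw [div_div_eq_mul_div, eq_comm]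
      rw [eq_div_iff (by positivity)]
      nlinarith
    rw [h1, h2]; ring
  rwa [heq] at this
end
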